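/- Let $W \ge 0$ be a random variable with $\mathbb{E}[W] = 1$ and let $c \in \mathbb{R}$ be a constant. Then $\mathbb{E}[c - W c] = 0$. More substantively, in the doubly-robust estimator with correctly specified density ratio: suppose $W_t = \omega(\tilde S_t)\rho_t$ satisfies $\mathbb{E}[W_t] = 1$, $\mathbb{E}[W_t R_t] = V(\pi)$ (the importance-sampling identity), and $\mathbb{E}[W_t\, Q(\pi(S_{t+1}), \tilde S_{t+1})] = \mathbb{E}[W_t\, Q(A_t, \tilde S_t)]$ (shift-invariance under the stationary target distribution). Then for any constant $\tilde V \in \mathbb{R}$ and the given $Q$, $\mathbb{E}\big[\tilde V + W_t(R_t + Q(\pi(S_{t+1}),\tilde S_{t+1}) - Q(A_t,\tilde S_t) - \tilde V)\big] = V(\pi)$. -/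
import Mathlib

open MeasureTheory

/-- Doubly-robust direction (correct density ratio): if the importance weight
`W` has mean one, `E[W R] = V(π)`, and the weighted Q-increments satisfy the
shift-invariance identity `E[W Qnext] = E[W Qcur]`, then the doubly-robust
estimator is unbiased for `V(π)` for any plug-in value `Vt`. -/
theorem stmt4 {Ω : Type*} [MeasurableSpace Ω] (μ : Measure Ω) [IsProbabilityMeasure μ]
    (W R Qn Qc : Ω → ℝ) (Vπ Vt : ℝ)
    (hW0 : ∀ᵐ x ∂μ, 0 ≤ W x)
    (hWint : Integrable W μ)
    (hWR : Integrable (fun x => W x * R x) μ)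
    (hWQn : Integrable (fun x => W x * Qn x) μ)
    (hWQc : Integrable (fun x => W x * Qc x) μ)
    (hW1 : ∫ x, W x ∂μ = 1)
    (hIS : ∫ x, W x * R x ∂μ = Vπ)
    (hshift : ∫ x, W x * Qn x ∂μ = ∫ x, W x * Qc x ∂μ) :
    ∫ x, (Vt + W x * (R x + Qn x - Qc x - Vt)) ∂μ = Vπ := by
  have h : ∀ x, Vt + W x * (R x + Qn x - Qc x - Vt)
      = Vt + (W x * R x + W x * Qn x - W x * Qc x - Vt * W x) := by
    intro x; ring
  simp only [h]
  have h1 : Integrable (fun x => W x * R x + W x * Qn x) μ := hWR.add hWQn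
  have h2 : Integrable (fun x => W x * R x + W x * Qn x - W x * Qc x) μ := h1.sub hWQc
  have h3 : Integrable (fun x => Vt * W x) μ := hWint.const_mul Vt
  have h4 : Integrable (fun x => W x * R x + W x * Qn x - W x * Qc x - Vt * W x) μ := h2.sub h3
  rw [integral_add (integrable_const _) h4,
    integral_sub h2 h3, integral_sub h1 hWQc, integral_add hWR hWQn,
    integral_const_mul, hW1, hIS, hshift]
  simp
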